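/- arXiv:0808.2230 — 3 statements merged into one kernel-verified Lean document; each statement's English description precedes it below -/
import Mathlib

section
/- In ℤ[√−5], if α is irreducible but not prime, then |N(α)| = p₁p₂ where p₁, p₂ are positive rational primes each equal to 2 or congruent to 3 or 7 modulo 20; conversely any element whose norm is such a product p₁p₂ of primes of this type (each lying below a nonprincipal prime ideal) is irreducible but not prime. -/
open Zsqrtd

private lemma nrm (α : ℤ√(-5)) : α.norm = α.re^2 + 5*α.im^2 := by
  rw [Zsqrtd.norm_def]; ring

private lemma dvd_of_norm_cong (α β : ℤ√(-5)) (M c : ℤ) (hM : M ≠ 0)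
    (hnorm : β.norm = M) (hc : M ∣ c^2+5)
    (hα : M ∣ α.re - c*α.im) (hβ : M ∣ β.re - c*β.im) :
    β ∣ α := by
  have hre : (α * star β).re = α.re * β.re + 5 * α.im * β.im := by
    rw [Zsqrtd.re_mul, Zsqrtd.re_star, Zsqrtd.im_star]; ring
  have him : (α * star β).im = α.im * β.re - α.re * β.im := by
    rw [Zsqrtd.im_mul, Zsqrtd.re_star, Zsqrtd.im_star]; ring
  have h1 : M ∣ (α * star β).re := by
    rw [hre, show α.re * β.re + 5 * α.im * β.im =
      β.re*(α.re - c*α.im) + c*α.im*(β.re - c*β.im) + α.im*β.im*(c^2+5) by ring]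
    exact dvd_add (dvd_add (hα.mul_left _) (hβ.mul_left _)) (hc.mul_left _)
  have h2 : M ∣ (α * star β).im := by
    rw [him, show α.im * β.re - α.re * β.im =
      α.im*(β.re - c*β.im) - β.im*(α.re - c*α.im) by ring]
    exact dvd_sub (hβ.mul_left _) (hα.mul_left _)
  obtain ⟨γ, hγ⟩ := (Zsqrtd.intCast_dvd M (α * star β)).mpr ⟨h1, h2⟩
  refine ⟨γ, ?_⟩
  have hβ0 : star β ≠ 0 := by
    intro h
    apply hM
    rw [← hnorm, nrm]
    have : β = 0 := by simpa using congrArg star h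
    simp [this]
  have hMc : (M : ℤ√(-5)) = β * star β := by rw [← hnorm, Zsqrtd.norm_eq_mul_conj]
  have : (α - β * γ) * star β = 0 := by
    rw [sub_mul, hγ, hMc]; ring
  have hsβ : (star β).norm = M := by
    rw [nrm, Zsqrtd.re_star, Zsqrtd.im_star, ← hnorm, nrm]; ring
  have hn : (α - β*γ).norm * M = 0 := by
    rw [← hsβ, ← Zsqrtd.norm_mul, this]; simp [Zsqrtd.norm_def]
  have hz : α - β * γ = 0 := by
    rw [← Zsqrtd.norm_eq_zero_iff (show (-5:ℤ) < 0 by norm_num)]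
    exact (mul_eq_zero.mp hn).resolve_right hM
  rw [sub_eq_zero] at hz
  exact hz

private lemma prime_of_norm_prime (π : ℤ√(-5)) (p : ℕ) (hp : p.Prime) (hnorm : π.norm = p) :
    Prime π := by
  haveI : Fact p.Prime := ⟨hp⟩
  have hp0 : ((p:ℕ) : ZMod p) = 0 := ZMod.natCast_self p
  have heq : (π.re : ZMod p)^2 + 5*(π.im : ZMod p)^2 = 0 := by
    have : ((π.norm : ℤ) : ZMod p) = ((p:ℕ) : ZMod p) := by rw [hnorm]; push_cast; ring
    rw [nrm, hp0] at this; push_cast at this; linear_combination this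
  have him : (π.im : ZMod p) ≠ 0 := by
    intro h
    have hre : (π.re : ZMod p) = 0 := by
      have h1 : (π.re : ZMod p)^2 = 0 := by rw [h] at heq; linear_combination heq
      exact sq_eq_zero_iff.mp h1
    obtain ⟨u, hu⟩ := (ZMod.intCast_zmod_eq_zero_iff_dvd _ _).mp hre
    obtain ⟨v, hv⟩ := (ZMod.intCast_zmod_eq_zero_iff_dvd _ _).mp h
    have hnn : π.norm = (p:ℤ) * ((p:ℤ)*(u^2+5*v^2)) := by
      rw [nrm, hu, hv]; ring
    have h1 : (p:ℤ)*(u^2+5*v^2) = 1 :=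
      mul_left_cancel₀ (show (p:ℤ) ≠ 0 by exact_mod_cast hp.pos.ne')
        (by rw [← hnn, hnorm, mul_one])
    have : (p:ℤ) ∣ 1 := ⟨_, h1.symm⟩
    have := Int.le_of_dvd one_pos this
    have := hp.two_le
    omega
  set c : ZMod p := -(π.re : ZMod p) * (π.im : ZMod p)⁻¹ with hcdef
  have hc : c * c = (-5 : ZMod p) := by
    rw [hcdef]
    field_simp
    linear_combination heq
  set φ : ℤ√(-5) →+* ZMod p := Zsqrtd.lift ⟨c, by rw [hc]; push_cast; ring⟩ with hφdef
  have happ : ∀ μ : ℤ√(-5), φ μ = (μ.re : ZMod p) + (μ.im : ZMod p) * c := by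
    intro μ; simp [hφdef]
  have hφπ : φ π = 0 := by
    rw [happ, hcdef]
    field_simp
    ring
  have key : ∀ μ : ℤ√(-5), φ μ = 0 → π ∣ μ := by
    intro μ hμ
    set cz : ℤ := ((-c).val : ℤ) with hcz
    have hczc : ((cz : ℤ) : ZMod p) = -c := by
      rw [hcz]; push_cast; exact ZMod.natCast_rightInverse _
    refine dvd_of_norm_cong μ π (p:ℤ) cz (show (p:ℤ) ≠ 0 by exact_mod_cast hp.pos.ne') (by exact_mod_cast hnorm) ?_ ?_ ?_
    · rw [← ZMod.intCast_zmod_eq_zero_iff_dvd]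
      push_cast
      rw [hczc]
      linear_combination hc
    · rw [← ZMod.intCast_zmod_eq_zero_iff_dvd]
      push_cast
      rw [hczc, happ] at *
      linear_combination hμ
    · rw [← ZMod.intCast_zmod_eq_zero_iff_dvd]
      push_cast
      rw [hczc]
      rw [happ] at hφπ
      linear_combination hφπ
  constructor
  · intro h
    rw [h] at hnorm
    simp [Zsqrtd.norm_def] at hnorm
    have := hp.two_le
    omega
  constructor
  · rw [← Zsqrtd.norm_eq_one_iff, hnorm]
    simpa using hp.ne_one
  · intro a b hab
    obtain ⟨δ, hδ⟩ := hab
    have : φ a * φ b = 0 := by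
      have := congrArg φ hδ
      rw [map_mul, map_mul, hφπ, zero_mul] at this
      rw [← this]
    rcases mul_eq_zero.mp this with h | h
    · exact Or.inl (key a h)
    · exact Or.inr (key b h)

private lemma isSquare_neg_five_iff (p : ℕ) [hp : Fact p.Prime] (h2 : p ≠ 2) (h5 : p ≠ 5) :
    IsSquare (-5 : ZMod p) ↔ (p % 20 = 1 ∨ p % 20 = 3 ∨ p % 20 = 7 ∨ p % 20 = 9) := by
  have hodd : Odd p := hp.out.odd_of_ne_two h2
  have hne : ((-5 : ℤ) : ZMod p) ≠ 0 := by
    rw [Ne, ZMod.intCast_zmod_eq_zero_iff_dvd]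
    intro h
    have h' : p ∣ 5 := by have := Int.natAbs_dvd_natAbs.mpr h; simpa using this
    exact h5 ((Nat.prime_dvd_prime_iff_eq hp.out (by norm_num)).mp h')
  have key : legendreSym p (-5) = jacobiSym (-5) (p % 20) := by
    rw [jacobiSym.legendreSym.to_jacobiSym, jacobiSym.mod_right _ hodd]
    norm_num
  have hcast : ((-5 : ℤ) : ZMod p) = (-5 : ZMod p) := by push_cast; ring
  have hmod : p % 20 = 1 ∨ p % 20 = 3 ∨ p % 20 = 7 ∨ p % 20 = 9 ∨
      p % 20 = 11 ∨ p % 20 = 13 ∨ p % 20 = 17 ∨ p % 20 = 19 := by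
    have h2' : p % 2 = 1 := Nat.odd_iff.mp hodd
    have h5' : ¬ (p % 5 = 0) := by
      intro h
      exact h5 ((Nat.prime_dvd_prime_iff_eq (by norm_num) hp.out).mp
        (Nat.dvd_of_mod_eq_zero h)).symm
    omega
  rcases hmod with h|h|h|h|h|h|h|h
  · have hv : legendreSym p (-5) = 1 := by rw [key, h]; norm_num
    exact iff_of_true (hcast ▸ (legendreSym.eq_one_iff p hne).mp hv) (by tauto)
  · have hv : legendreSym p (-5) = 1 := by rw [key, h]; norm_num
    exact iff_of_true (hcast ▸ (legendreSym.eq_one_iff p hne).mp hv) (by tauto)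
  · have hv : legendreSym p (-5) = 1 := by rw [key, h]; norm_num
    exact iff_of_true (hcast ▸ (legendreSym.eq_one_iff p hne).mp hv) (by tauto)
  · have hv : legendreSym p (-5) = 1 := by rw [key, h]; norm_num
    exact iff_of_true (hcast ▸ (legendreSym.eq_one_iff p hne).mp hv) (by tauto)
  · have hv : legendreSym p (-5) = -1 := by rw [key, h]; norm_num
    exact iff_of_false (hcast ▸ (legendreSym.eq_neg_one_iff p).mp hv) (by omega)
  · have hv : legendreSym p (-5) = -1 := by rw [key, h]; norm_num
    exact iff_of_false (hcast ▸ (legendreSym.eq_neg_one_iff p).mp hv) (by omega)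
  · have hv : legendreSym p (-5) = -1 := by rw [key, h]; norm_num
    exact iff_of_false (hcast ▸ (legendreSym.eq_neg_one_iff p).mp hv) (by omega)
  · have hv : legendreSym p (-5) = -1 := by rw [key, h]; norm_num
    exact iff_of_false (hcast ▸ (legendreSym.eq_neg_one_iff p).mp hv) (by omega)

private lemma cop2 (M : ℕ) (h : M % 2 = 1) : IsCoprime (M:ℤ) 2 :=
  ⟨1, -((M:ℤ)/2), by omega⟩

private lemma cop5 (M : ℕ) (h : M % 5 = 1 ∨ M % 5 = 4) : IsCoprime (M:ℤ) 5 := by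
  rcases h with h | h
  · exact ⟨1, -((M:ℤ)/5), by omega⟩
  · exact ⟨4, -((4*(M:ℤ)-1)/5), by omega⟩

set_option maxHeartbeats 1000000 in
private lemma construct (M : ℕ) (hM : 1 < M) (h2 : M % 2 = 1) (h4 : M % 4 = 1)
    (h5 : M % 5 = 1 ∨ M % 5 = 4) (c : ℤ) (hc : (M:ℤ) ∣ c^2 + 5) :
    ∃ x y : ℤ, x^2 + 5*y^2 = (M:ℤ) ∧ (M:ℤ) ∣ x - c*y := by
  haveI : NeZero M := ⟨by omega⟩
  set s := Nat.sqrt M with hs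
  have hcard : Fintype.card (ZMod M) < Fintype.card (Fin (s+1) × Fin (s+1)) := by
    rw [ZMod.card, Fintype.card_prod, Fintype.card_fin]
    exact Nat.lt_succ_sqrt M
  obtain ⟨ij1, ij2, hne, heq⟩ :=
    Fintype.exists_ne_map_eq_of_card_lt
      (fun ij : Fin (s+1) × Fin (s+1) => (((ij.1 : ℤ) - c * (ij.2 : ℤ) : ℤ) : ZMod M)) hcard
  set x : ℤ := (ij1.1 : ℤ) - (ij2.1 : ℤ) with hx
  set y : ℤ := (ij1.2 : ℤ) - (ij2.2 : ℤ) with hy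
  have hdvd : (M:ℤ) ∣ x - c*y := by
    have h1 := Int.ModEq.dvd ((ZMod.intCast_eq_intCast_iff _ _ _).mp heq)
    have h3 : x - c*y = -(((ij2.1:ℤ) - c*(ij2.2:ℤ)) - ((ij1.1:ℤ) - c*(ij1.2:ℤ))) := by
      rw [hx, hy]; ring
    rw [h3]; exact dvd_neg.mpr h1
  have hb1 : (ij1.1 : ℤ) ≤ s := by exact_mod_cast Nat.lt_succ_iff.mp ij1.1.isLt
  have hb2 : (ij2.1 : ℤ) ≤ s := by exact_mod_cast Nat.lt_succ_iff.mp ij2.1.isLt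
  have hb3 : (ij1.2 : ℤ) ≤ s := by exact_mod_cast Nat.lt_succ_iff.mp ij1.2.isLt
  have hb4 : (ij2.2 : ℤ) ≤ s := by exact_mod_cast Nat.lt_succ_iff.mp ij2.2.isLt
  have hb5 : (0:ℤ) ≤ ij1.1 := Int.natCast_nonneg _
  have hb6 : (0:ℤ) ≤ ij2.1 := Int.natCast_nonneg _
  have hb7 : (0:ℤ) ≤ ij1.2 := Int.natCast_nonneg _
  have hb8 : (0:ℤ) ≤ ij2.2 := Int.natCast_nonneg _
  have hx2 : x^2 ≤ (s:ℤ)^2 := sq_le_sq' (by rw [hx]; linarith) (by rw [hx]; linarith)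
  have hy2 : y^2 ≤ (s:ℤ)^2 := sq_le_sq' (by rw [hy]; linarith) (by rw [hy]; linarith)
  have hsM : (s:ℤ)^2 ≤ (M:ℤ) := by exact_mod_cast Nat.sqrt_le' M
  clear_value s
  have hne0 : ¬ (x = 0 ∧ y = 0) := by
    rintro ⟨ha, hb⟩
    apply hne
    have e1 : ij1.1 = ij2.1 := Fin.ext (by
      have : (ij1.1 : ℤ) = (ij2.1 : ℤ) := by rw [hx] at ha; linarith
      exact_mod_cast this)
    have e2 : ij1.2 = ij2.2 := Fin.ext (by
      have : (ij1.2 : ℤ) = (ij2.2 : ℤ) := by rw [hy] at hb; linarith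
      exact_mod_cast this)
    exact Prod.ext e1 e2
  have hpos : 0 < x^2 + 5*y^2 := by
    rcases not_and_or.mp hne0 with h | h
    · have : 0 < x^2 := lt_of_le_of_ne (sq_nonneg x) (Ne.symm (pow_ne_zero 2 h))
      nlinarith [sq_nonneg y]
    · have : 0 < y^2 := lt_of_le_of_ne (sq_nonneg y) (Ne.symm (pow_ne_zero 2 h))
      nlinarith [sq_nonneg x]
  have hDsum : (M:ℤ) ∣ x^2 + 5*y^2 := by
    rw [show x^2 + 5*y^2 = (x - c*y)*(x+c*y) + y^2*(c^2+5) by ring]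
    exact dvd_add (hdvd.mul_right _) (hc.mul_left _)
  obtain ⟨k, hk⟩ := hDsum
  have hM0 : (0:ℤ) < M := by exact_mod_cast Nat.zero_lt_of_lt hM
  have hk1 : 1 ≤ k := by
    by_contra h
    push_neg at h
    have hk0 : k ≤ 0 := by omega
    nlinarith
  have hk6 : k ≤ 6 := by
    have hup : (M:ℤ)*k ≤ (M:ℤ)*6 := by linarith
    exact le_of_mul_le_mul_left hup hM0
  interval_cases k
  -- k = 1
  · exact ⟨x, y, by linarith, hdvd⟩
  -- k = 2
  · exfalso
    have hcst := congrArg (fun t : ℤ => (t : ZMod 8)) hk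
    push_cast at hcst
    have h8 : M % 8 = 1 ∨ M % 8 = 5 := by omega
    have hM8 : ((M:ℕ) : ZMod 8) = 1 ∨ ((M:ℕ) : ZMod 8) = 5 := by
      rw [← ZMod.natCast_mod M 8]
      rcases h8 with h | h <;> rw [h] <;> [left; right] <;> simp
    have key : ∀ a b m : ZMod 8, (m = 1 ∨ m = 5) → a^2+5*b^2 ≠ m*2 := by decide
    exact key (x : ZMod 8) (y : ZMod 8) ((M:ℕ) : ZMod 8) hM8 hcst
  -- k = 3
  · exfalso
    have hcst := congrArg (fun t : ℤ => (t : ZMod 5)) hk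
    push_cast at hcst
    have hM5 : ((M:ℕ) : ZMod 5) = 1 ∨ ((M:ℕ) : ZMod 5) = 4 := by
      rw [← ZMod.natCast_mod M 5]
      rcases h5 with h | h <;> rw [h] <;> [left; right] <;> simp
    have key : ∀ a b m : ZMod 5, (m = 1 ∨ m = 4) → a^2+5*b^2 ≠ m*3 := by decide
    exact key (x : ZMod 5) (y : ZMod 5) ((M:ℕ) : ZMod 5) hM5 hcst
  -- k = 4
  · rcases Int.even_or_odd x with ⟨u, hu⟩ | ⟨u, hu⟩ <;>
      rcases Int.even_or_odd y with ⟨v, hv⟩ | ⟨v, hv⟩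
    · -- both even
      refine ⟨u, v, ?_, ?_⟩
      · have h4e : (4:ℤ)*(u^2+5*v^2) = 4*M := by rw [hu, hv] at hk; linear_combination hk
        linarith
      · have h2w : (M:ℤ) ∣ 2*(u - c*v) := by
          rw [show (2:ℤ)*(u-c*v) = x - c*y by rw [hu, hv]; ring]
          exact hdvd
        exact (cop2 M h2).dvd_of_dvd_mul_left (by rw [mul_comm] at h2w ⊢; exact h2w)
    · exfalso
      have key : 4*(u^2+5*v^2+5*v+1) + 1 = (M:ℤ)*4 := by rw [hu, hv] at hk; linear_combination hk
      set w := u^2+5*v^2+5*v+1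
      omega
    · exfalso
      have key : 4*(u^2+u+5*v^2) + 1 = (M:ℤ)*4 := by rw [hu, hv] at hk; linear_combination hk
      set w := u^2+u+5*v^2
      omega
    · exfalso
      have key : 4*(u^2+u+5*v^2+5*v+1) + 2 = (M:ℤ)*4 := by rw [hu, hv] at hk; linear_combination hk
      set w := u^2+u+5*v^2+5*v+1
      omega
  -- k = 5
  · have h5x : (5:ℤ) ∣ x := by
      have hp5 : Prime (5:ℤ) := by norm_num
      refine hp5.dvd_of_dvd_pow (n := 2) ⟨(M:ℤ) - y^2, by linarith⟩
    obtain ⟨u, hu⟩ := h5x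
    refine ⟨y, -u, ?_, ?_⟩
    · have h5e : (5:ℤ)*(y^2+5*u^2) = 5*(M:ℤ) := by rw [hu] at hk; linear_combination hk
      have h5f := mul_left_cancel₀ (show (5:ℤ) ≠ 0 by norm_num) h5e
      linear_combination h5f
    · have h5w : (M:ℤ) ∣ 5*(y + c*u) := by
        rw [show (5:ℤ)*(y+c*u) = c*(x - c*y) + (c^2+5)*y by rw [hu]; ring]
        exact dvd_add (hdvd.mul_left c) (hc.mul_right y)
      have := (cop5 M h5).dvd_of_dvd_mul_left (by rw [mul_comm] at h5w ⊢; exact h5w)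
      rw [show y - c*(-u) = y + c*u by ring]
      exact this
  -- k = 6
  · have hxs : x^2 = (s:ℤ)^2 := by nlinarith
    have hys : y^2 = (s:ℤ)^2 := by nlinarith
    have hsM' : (s:ℤ)^2 = M := by nlinarith
    have hsodd : (s:ℕ) % 2 = 1 := by
      rcases Nat.even_or_odd s with ⟨t, ht⟩ | h
      · exfalso
        have hdvd2 : (2:ℤ) ∣ (M:ℤ) := ⟨2*(t:ℤ)^2, by rw [← hsM', ht]; push_cast; ring⟩
        omega
      · exact Nat.odd_iff.mp h
    have hsd6 : (s:ℤ) ∣ 6 := by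
      -- x = ±s, y = ±s, s² ∣ x - c y, s ∣ c²+5
      have hsne : (s:ℤ) ≠ 0 := by
        intro h; rw [h] at hsM'; simp at hsM'; omega
      have hxpm : x = s ∨ x = -s := by
        have : (x - s)*(x + s) = 0 := by linarith [hxs]
        rcases mul_eq_zero.mp this with h | h
        · left; linarith
        · right; linarith
      have hypm : y = s ∨ y = -s := by
        have : (y - s)*(y + s) = 0 := by linarith [hys]
        rcases mul_eq_zero.mp this with h | h
        · left; linarith
        · right; linarith
      have hscc : (s:ℤ) ∣ c^2+5 := by
        refine dvd_trans ?_ hc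
        exact ⟨s, by rw [← hsM']; ring⟩
      -- from s^2 ∣ x - c*y get s ∣ 1 - εc for some sign; then s ∣ c^2 - 1; s ∣ 6
      have hs2dvd : (s:ℤ)*(s:ℤ) ∣ x - c*y := by
        rw [show (s:ℤ)*(s:ℤ) = (M:ℤ) by rw [← hsM']; ring]
        exact hdvd
      have hkey : (s:ℤ) ∣ c^2 - 1 := by
        rcases hxpm with hxe | hxe <;> rcases hypm with hye | hye
        · -- x = s, y = s : s*s ∣ s*(1 - c) → s ∣ 1 - c → c ≡ 1
          have h1 : (s:ℤ) ∣ 1 - c := by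
            have := hs2dvd
            rw [hxe, hye, show (s:ℤ) - c*s = s*(1-c) by ring] at this
            exact (mul_dvd_mul_iff_left hsne).mp this
          obtain ⟨t, ht⟩ := h1
          exact ⟨-(t*(1+c)), by linear_combination (-(1+c)) * ht⟩
        · have h1 : (s:ℤ) ∣ 1 + c := by
            have := hs2dvd
            rw [hxe, hye, show (s:ℤ) - c*(-s) = s*(1+c) by ring] at this
            exact (mul_dvd_mul_iff_left hsne).mp this
          obtain ⟨t, ht⟩ := h1
          exact ⟨t*(c-1), by linear_combination (c-1) * ht⟩
        · have h1 : (s:ℤ) ∣ 1 + c := by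
            have := hs2dvd
            rw [hxe, hye, show (-s:ℤ) - c*s = -(s*(1+c)) by ring] at this
            exact (mul_dvd_mul_iff_left hsne).mp (dvd_neg.mp this)
          obtain ⟨t, ht⟩ := h1
          exact ⟨t*(c-1), by linear_combination (c-1) * ht⟩
        · have h1 : (s:ℤ) ∣ 1 - c := by
            have := hs2dvd
            rw [hxe, hye, show (-s:ℤ) - c*(-s) = -(s*(1-c)) by ring] at this
            exact (mul_dvd_mul_iff_left hsne).mp (dvd_neg.mp this)
          obtain ⟨t, ht⟩ := h1
          exact ⟨-(t*(1+c)), by linear_combination (-(1+c)) * ht⟩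
      have : (s:ℤ) ∣ 6 := by
        have := dvd_sub hscc hkey
        simpa using this
      exact this
    have hs6 : s ∣ 6 := Int.ofNat_dvd.mp hsd6
    have hs3 : s = 3 := by
      have hge : 2 ≤ s := by
        by_contra h
        push_neg at h
        have hsz : (s:ℤ) ≤ 1 := by exact_mod_cast Nat.lt_succ_iff.mp h
        have hsz0 : (0:ℤ) ≤ (s:ℤ) := Int.natCast_nonneg _
        nlinarith [hsM']
      have hmem : s ∈ Nat.divisors 6 := Nat.mem_divisors.mpr ⟨hs6, by norm_num⟩
      have hset : s = 1 ∨ s = 2 ∨ s = 3 ∨ s = 6 := by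
        rw [show (Nat.divisors 6) = ({1,2,3,6} : Finset ℕ) from by decide] at hmem
        simpa using hmem
      omega
    have hM9 : (M:ℤ) = 9 := by rw [← hsM', hs3]; norm_num
    -- c² ≡ 4 mod 9
    have h9 : (9:ℤ) ∣ (c-2)*(c+2) := by
      have : (9:ℤ) ∣ c^2+5 := by rw [← hM9]; exact hc
      obtain ⟨t, ht⟩ := this
      exact ⟨t - 1, by linarith [ht]⟩
    have h3 : Prime (3:ℤ) := by norm_num
    rcases h3.dvd_mul.mp (dvd_trans (by norm_num) h9) with hd | hd
    · -- 3 ∣ c - 2, so 3 ∤ c+2, so 9 ∣ c-2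
      have hnd : ¬ (3:ℤ) ∣ c + 2 := by
        intro h
        have : (3:ℤ) ∣ 4 := by
          have := dvd_sub h hd
          simpa using this
        norm_num at this
      -- (c+2)^2 = 3m+1
      obtain ⟨m, hm⟩ : ∃ m, (c+2)^2 = 3*m + 1 := by
        have hmod : (c+2) % 3 = 1 ∨ (c+2) % 3 = 2 := by
          have h0 : (c+2) % 3 ≠ 0 := fun h => hnd (Int.dvd_of_emod_eq_zero h)
          omega
        rcases hmod with h | h
        · obtain ⟨t, ht⟩ : ∃ t, c + 2 = 3*t + 1 := ⟨(c+2)/3, by omega⟩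
          exact ⟨3*t^2+2*t, by rw [ht]; ring⟩
        · obtain ⟨t, ht⟩ : ∃ t, c + 2 = 3*t + 2 := ⟨(c+2)/3, by omega⟩
          exact ⟨3*t^2+4*t+1, by rw [ht]; ring⟩
      have h9d : (9:ℤ) ∣ c - 2 := by
        -- 9 ∣ (c-2)(c+2); (c+2)^6 ≡ 1 mod 9
        obtain ⟨w, hw⟩ := h9
        -- (c-2) = (c-2)(c+2)·(c+2)^5 - (c-2)((c+2)^6 - 1)
        have h6 : (9:ℤ) ∣ (c+2)^6 - 1 := ⟨3*m^3+3*m^2+m, by rw [show ((c+2)^6 : ℤ) = ((c+2)^2)^3 by ring, hm]; ring⟩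
        obtain ⟨v, hv⟩ := h6
        exact ⟨w*(c+2)^5 - (c-2)*v, by linear_combination (c+2)^5 * hw - (c-2)*hv⟩
      obtain ⟨t, ht⟩ := h9d
      exact ⟨2, 1, by rw [hM9]; ring, by rw [hM9]; exact ⟨-t, by linarith⟩⟩
    · have hnd : ¬ (3:ℤ) ∣ c - 2 := by
        intro h
        have : (3:ℤ) ∣ 4 := by
          have := dvd_sub hd h
          simpa using this
        norm_num at this
      obtain ⟨m, hm⟩ : ∃ m, (c-2)^2 = 3*m + 1 := by
        have hmod : (c-2) % 3 = 1 ∨ (c-2) % 3 = 2 := by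
          have h0 : (c-2) % 3 ≠ 0 := fun h => hnd (Int.dvd_of_emod_eq_zero h)
          omega
        rcases hmod with h | h
        · obtain ⟨t, ht⟩ : ∃ t, c - 2 = 3*t + 1 := ⟨(c-2)/3, by omega⟩
          exact ⟨3*t^2+2*t, by rw [ht]; ring⟩
        · obtain ⟨t, ht⟩ : ∃ t, c - 2 = 3*t + 2 := ⟨(c-2)/3, by omega⟩
          exact ⟨3*t^2+4*t+1, by rw [ht]; ring⟩
      have h9d : (9:ℤ) ∣ c + 2 := by
        obtain ⟨w, hw⟩ := h9
        have h6 : (9:ℤ) ∣ (c-2)^6 - 1 := ⟨3*m^3+3*m^2+m, by rw [show ((c-2)^6 : ℤ) = ((c-2)^2)^3 by ring, hm]; ring⟩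
        obtain ⟨v, hv⟩ := h6
        exact ⟨w*(c-2)^5 - (c+2)*v, by linear_combination (c-2)^5 * hw - (c+2)*hv⟩
      obtain ⟨t, ht⟩ := h9d
      exact ⟨2, -1, by rw [hM9]; ring, by rw [hM9]; exact ⟨t, by linarith⟩⟩

-- no element has norm equal to 2 or to a prime ≡ 3 mod 4
private lemma no_rep_bad (p : ℕ) (hbad : p = 2 ∨ p % 4 = 3) (x y : ℤ) :
    x^2 + 5*y^2 ≠ (p:ℤ) := by
  intro h
  have hcst := congrArg (fun t : ℤ => (t : ZMod 8)) h
  push_cast at hcst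
  have h8 : p % 8 = 2 ∨ p % 8 = 3 ∨ p % 8 = 7 := by omega
  have hp8 : ((p:ℕ) : ZMod 8) = 2 ∨ ((p:ℕ) : ZMod 8) = 3 ∨ ((p:ℕ) : ZMod 8) = 7 := by
    rw [← ZMod.natCast_mod p 8]
    rcases h8 with h' | h' | h' <;> rw [h'] <;> [left; (right; left); (right; right)] <;> simp
  have key : ∀ a b q : ZMod 8, (q = 2 ∨ q = 3 ∨ q = 7) → a^2+5*b^2 ≠ q := by decide
  exact key _ _ _ hp8 hcst

-- p inert: -5 not a square mod p implies p is prime in ℤ√-5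
private lemma prime_coe_of_not_isSquare (p : ℕ) (hp : p.Prime)
    (h : ¬ IsSquare (-5 : ZMod p)) : Prime ((p:ℤ) : ℤ√(-5)) := by
  haveI : Fact p.Prime := ⟨hp⟩
  have hp2 : p ≠ 2 := by
    intro h2
    exact h (by subst h2; decide)
  have key : ∀ μ : ℤ√(-5), (p:ℤ) ∣ μ.norm → ((p:ℤ) : ℤ√(-5)) ∣ μ := by
    intro μ hdvd
    have hzero : (μ.re : ZMod p)^2 + 5*(μ.im : ZMod p)^2 = 0 := by
      have : ((μ.norm : ℤ) : ZMod p) = 0 := (ZMod.intCast_zmod_eq_zero_iff_dvd _ _).mpr hdvd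
      rw [nrm] at this; push_cast at this; linear_combination this
    have him : (μ.im : ZMod p) = 0 := by
      by_contra him
      apply h
      exact ⟨(μ.re : ZMod p) * (μ.im : ZMod p)⁻¹, by field_simp; linear_combination -hzero⟩
    have hre : (μ.re : ZMod p) = 0 := by
      have : (μ.re : ZMod p)^2 = 0 := by rw [him] at hzero; linear_combination hzero
      exact sq_eq_zero_iff.mp this
    rw [Zsqrtd.intCast_dvd]
    exact ⟨(ZMod.intCast_zmod_eq_zero_iff_dvd _ _).mp hre,
      (ZMod.intCast_zmod_eq_zero_iff_dvd _ _).mp him⟩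
  refine ⟨?_, ?_, ?_⟩
  · intro h0
    have : ((p:ℤ) : ℤ√(-5)).re = 0 := by rw [h0]; rfl
    simp [Zsqrtd.re_intCast] at this
    exact hp.ne_zero (by exact_mod_cast this)
  · rw [← Zsqrtd.norm_eq_one_iff, Zsqrtd.norm_intCast]
    have := hp.two_le
    simp only [Int.natAbs_mul, Int.natAbs_natCast]
    intro hcon
    have : p * p = 1 := by exact_mod_cast hcon
    nlinarith
  · intro a b hab
    have hn : (p:ℤ) ∣ a.norm * b.norm := by
      obtain ⟨δ, hδ⟩ := hab
      have : (a*b).norm = ((p:ℤ)*(p:ℤ))*δ.norm := by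
        rw [hδ, Zsqrtd.norm_mul, Zsqrtd.norm_intCast]
      rw [Zsqrtd.norm_mul] at this
      exact ⟨(p:ℤ)*δ.norm, by linarith [this]⟩
    rcases ((Nat.prime_iff_prime_int.mp hp).dvd_mul.mp hn) with h' | h'
    · exact Or.inl (key a h')
    · exact Or.inr (key b h')

-- bad primes are not prime elements (given a square root of -5 mod p)
private lemma not_prime_coe (p : ℕ) (hp : p.Prime) (c : ℤ) (hc : (p:ℤ) ∣ c^2 + 5) :
    ¬ Prime ((p:ℤ) : ℤ√(-5)) := by
  intro hpr
  have hdvd : ((p:ℤ) : ℤ√(-5)) ∣ (⟨c,1⟩ : ℤ√(-5)) * ⟨c,-1⟩ := by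
    have hmul : (⟨c,1⟩ : ℤ√(-5)) * ⟨c,-1⟩ = ⟨c^2+5, 0⟩ := by
      ext <;> simp [Zsqrtd.re_mul, Zsqrtd.im_mul] <;> ring
    rw [hmul, Zsqrtd.intCast_dvd]
    constructor
    · simpa using hc
    · simp
  have h1 : ¬ ((p:ℤ) : ℤ√(-5)) ∣ (⟨c,1⟩ : ℤ√(-5)) := by
    rw [Zsqrtd.intCast_dvd]
    rintro ⟨-, hd⟩
    simp only [] at hd
    have := Int.le_of_dvd one_pos hd
    have := hp.two_le
    omega
  have h2 : ¬ ((p:ℤ) : ℤ√(-5)) ∣ (⟨c,-1⟩ : ℤ√(-5)) := by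
    rw [Zsqrtd.intCast_dvd]
    rintro ⟨-, hd⟩
    rw [dvd_neg] at hd
    have := Int.le_of_dvd one_pos hd
    have := hp.two_le
    omega
  rcases hpr.2.2 _ _ hdvd with h | h
  · exact h1 h
  · exact h2 h


private lemma prime_of_assoc (π α : ℤ√(-5)) (hπ : Prime π) (hdvd : π ∣ α)
    (hirr : Irreducible α) : Prime α := by
  obtain ⟨γ, hγ⟩ := hdvd
  rcases hirr.isUnit_or_isUnit hγ with h | h
  · exact absurd h hπ.not_isUnit
  · obtain ⟨u, hu⟩ := h
    have hassoc : Associated π α := ⟨u, by rw [hγ, hu]⟩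
    exact hassoc.prime hπ

private lemma star_prime (π : ℤ√(-5)) (hπ : Prime π) : Prime (star π) := by
  have flip : ∀ x : ℤ√(-5), π ∣ star x → star π ∣ x := by
    rintro x ⟨γ, hγ⟩
    exact ⟨star γ, by rw [← star_star x, hγ, star_mul, mul_comm]⟩
  refine ⟨fun h => hπ.1 (by simpa using congrArg star h),
    fun h => hπ.2.1 (isUnit_star.mp h), ?_⟩
  intro a b hab
  have h1 : π ∣ star b * star a := by
    obtain ⟨γ, hγ⟩ := hab
    rw [← star_mul]
    exact ⟨star γ, by rw [hγ, star_mul, mul_comm, star_star]⟩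
  rcases hπ.2.2 _ _ h1 with h | h
  · exact Or.inr (flip b h)
  · exact Or.inl (flip a h)

private lemma bad_of_prime_dvd (α : ℤ√(-5)) (hirr : Irreducible α) (hnp : ¬ Prime α)
    (p : ℕ) (hp : p.Prime) (hdvd : (p:ℤ) ∣ α.norm) :
    p = 2 ∨ p % 20 = 3 ∨ p % 20 = 7 := by
  haveI : Fact p.Prime := ⟨hp⟩
  by_contra hbad
  push_neg at hbad
  obtain ⟨hb2, hb3, hb7⟩ := hbad
  have done : ∀ π : ℤ√(-5), Prime π → π ∣ ((p:ℤ) : ℤ√(-5)) → False := by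
    intro π hπ hπp
    have h1 : ((p:ℤ) : ℤ√(-5)) ∣ (α.norm : ℤ√(-5)) := by
      obtain ⟨t, ht⟩ := hdvd
      exact ⟨(t : ℤ√(-5)), by rw [ht]; push_cast; ring⟩
    have h2 : π ∣ α * star α := by
      have := dvd_trans hπp h1
      rwa [Zsqrtd.norm_eq_mul_conj] at this
    have h3 : π ∣ α ∨ star π ∣ α := by
      rcases hπ.2.2 _ _ h2 with h | h
      · exact Or.inl h
      · right
        obtain ⟨γ, hγ⟩ := h
        refine ⟨star γ, ?_⟩
        calc α = star (star α) := (star_star α).symm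
        _ = star (π * γ) := by rw [hγ]
        _ = star π * star γ := by rw [star_mul, mul_comm]
    rcases h3 with h | h
    · exact hnp (prime_of_assoc π α hπ h hirr)
    · exact hnp (prime_of_assoc (star π) α (star_prime π hπ) h hirr)
  by_cases hp5 : p = 5
  · subst hp5
    have hnorm : (⟨0,1⟩ : ℤ√(-5)).norm = (5:ℕ) := by rw [nrm]; norm_num
    have hπ : Prime (⟨0,1⟩ : ℤ√(-5)) := prime_of_norm_prime _ 5 (by norm_num) hnorm
    refine done _ hπ ?_
    refine ⟨star (⟨0,1⟩ : ℤ√(-5)), ?_⟩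
    have := Zsqrtd.norm_eq_mul_conj (⟨0,1⟩ : ℤ√(-5))
    rw [hnorm] at this
    exact_mod_cast this
  · have hp2 : p % 2 = 1 := Nat.odd_iff.mp (hp.odd_of_ne_two hb2)
    have hp5' : ¬ (p % 5 = 0) := by
      intro h
      exact hp5 ((Nat.prime_dvd_prime_iff_eq (by norm_num) hp).mp
        (Nat.dvd_of_mod_eq_zero h)).symm
    have hsqiff := isSquare_neg_five_iff p hb2 hp5
    by_cases hsq : IsSquare (-5 : ZMod p)
    · -- split principal: get element of norm p
      have hmod : p % 4 = 1 ∧ (p % 5 = 1 ∨ p % 5 = 4) := by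
        rcases hsqiff.mp hsq with h|h|h|h <;> omega
      obtain ⟨c₀, hc₀⟩ := hsq
      have hc : (p:ℤ) ∣ ((c₀.val : ℤ))^2 + 5 := by
        rw [← ZMod.intCast_zmod_eq_zero_iff_dvd]
        push_cast
        rw [ZMod.natCast_rightInverse c₀]
        linear_combination -hc₀
      obtain ⟨x, y, hxy, -⟩ := construct p hp.one_lt hp2 hmod.1 hmod.2 _ hc
      have hnorm : (⟨x,y⟩ : ℤ√(-5)).norm = (p:ℕ) := by rw [nrm]; exact_mod_cast hxy
      have hπ : Prime (⟨x,y⟩ : ℤ√(-5)) := prime_of_norm_prime _ p hp hnorm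
      refine done _ hπ ?_
      refine ⟨star (⟨x,y⟩ : ℤ√(-5)), ?_⟩
      have := Zsqrtd.norm_eq_mul_conj (⟨x,y⟩ : ℤ√(-5))
      rw [hnorm] at this
      exact_mod_cast this
    · exact done _ (prime_coe_of_not_isSquare p hp hsq) dvd_rfl

private lemma exists_divisor (α : ℤ√(-5)) (p q : ℕ) (hp : q.Prime → True) (hpp : p.Prime) (hqp : q.Prime)
    (hp20 : p % 20 = 3 ∨ p % 20 = 7) (hq20 : q % 20 = 3 ∨ q % 20 = 7)
    (hdvd : ((p*q : ℕ) : ℤ) ∣ α.norm)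
    (hpα : ¬ ((p:ℤ) : ℤ√(-5)) ∣ α) (hqα : ¬ ((q:ℤ) : ℤ√(-5)) ∣ α) :
    ∃ β : ℤ√(-5), β ∣ α ∧ β.norm = ((p*q : ℕ) : ℤ) := by
  obtain ⟨w, hw⟩ := hdvd
  have hw' : α.re^2 + 5*α.im^2 = ((p*q:ℕ):ℤ) * w := by rw [← nrm]; exact hw
  have hnotb : ∀ r : ℕ, r.Prime → ¬ ((r:ℤ):ℤ√(-5)) ∣ α → (r:ℤ) ∣ α.norm → ¬ (r:ℤ) ∣ α.im := by
    intro r hr hrα hrn hrb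
    apply hrα
    rw [Zsqrtd.intCast_dvd]
    refine ⟨?_, hrb⟩
    have h1 : (r:ℤ) ∣ α.re^2 := by
      obtain ⟨t, ht⟩ := hrb
      obtain ⟨s, hs⟩ := hrn
      refine ⟨s - 5*r*t^2, ?_⟩
      have : α.re^2 = α.norm - 5*α.im^2 := by rw [nrm]; ring
      rw [this, hs, ht]; ring
    exact (Nat.prime_iff_prime_int.mp hr).dvd_of_dvd_pow h1
  have hpdn : (p:ℤ) ∣ α.norm := ⟨(q:ℤ)*w, by rw [hw]; push_cast; ring⟩
  have hqdn : (q:ℤ) ∣ α.norm := ⟨(p:ℤ)*w, by rw [hw]; push_cast; ring⟩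
  have hpb := hnotb p hpp hpα hpdn
  have hqb := hnotb q hqp hqα hqdn
  have hcop : IsCoprime (((p*q:ℕ)):ℤ) α.im := by
    push_cast
    exact IsCoprime.mul_left ((Nat.prime_iff_prime_int.mp hpp).coprime_iff_not_dvd.mpr hpb)
      ((Nat.prime_iff_prime_int.mp hqp).coprime_iff_not_dvd.mpr hqb)
  obtain ⟨u, v, huv⟩ := hcop
  set c : ℤ := α.re * v with hcdef
  have h1 : ((p*q:ℕ):ℤ) ∣ α.re - c*α.im :=
    ⟨α.re*u, by linear_combination (-α.re) * huv⟩
  have h2 : ((p*q:ℕ):ℤ) ∣ c^2+5 :=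
    ⟨v^2*w + 5*u*(2 - u*((p*q:ℕ):ℤ)), by linear_combination v^2*hw' + 5*(u*((p*q:ℕ):ℤ) - 1 - v*α.im)*huv⟩
  have hp4 : p % 4 = 3 := by omega
  have hq4 : q % 4 = 3 := by omega
  have hp5 : p % 5 = 2 ∨ p % 5 = 3 := by omega
  have hq5 : q % 5 = 2 ∨ q % 5 = 3 := by omega
  have hM1 : 1 < p*q := by
    have := hpp.two_le; have := hqp.two_le
    nlinarith
  have hM2 : (p*q) % 2 = 1 := by
    have e1 : p % 2 = 1 := by omega
    have e2 : q % 2 = 1 := by omega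
    rw [Nat.mul_mod, e1, e2]
  have hM4 : (p*q) % 4 = 1 := by
    rw [Nat.mul_mod, hp4, hq4]
  have hM5 : (p*q) % 5 = 1 ∨ (p*q) % 5 = 4 := by
    rw [Nat.mul_mod]
    rcases hp5 with h | h <;> rcases hq5 with h' | h' <;> rw [h, h'] <;> [right; left; left; right] <;> rfl
  obtain ⟨x, y, hxy, hcong⟩ := construct (p*q) hM1 hM2 hM4 hM5 c h2
  refine ⟨⟨x,y⟩, ?_, by rw [nrm]; exact hxy⟩
  refine dvd_of_norm_cong α ⟨x,y⟩ ((p*q:ℕ):ℤ) c ?_ (by rw [nrm]; exact hxy) h2 h1 hcong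
  have := hM1
  exact_mod_cast Nat.pos_of_ne_zero (by omega) |>.ne'

private lemma forward_core (α : ℤ√(-5)) (hirr : Irreducible α) (n m : ℕ)
    (hncast : (n:ℤ) = α.norm)
    (hbadall : ∀ r : ℕ, r.Prime → r ∣ n → (r = 2 ∨ r % 20 = 3 ∨ r % 20 = 7))
    (hA : ∀ r : ℕ, r.Prime → ¬ ((r:ℤ) : ℤ√(-5)) ∣ α)
    (hm : n = m ∨ n = 2*m) (hmodd : m % 2 = 1) (hm2 : 2 ≤ m) :
    ∃ p₁ p₂ : ℕ, p₁.Prime ∧ p₂.Prime ∧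
      (p₁ = 2 ∨ p₁ % 20 = 3 ∨ p₁ % 20 = 7) ∧
      (p₂ = 2 ∨ p₂ % 20 = 3 ∨ p₂ % 20 = 7) ∧ n = p₁ * p₂ := by
  set p := m.minFac with hpdef
  have hpp : p.Prime := Nat.minFac_prime (by omega)
  have hpm : p ∣ m := Nat.minFac_dvd m
  have hmn : m ∣ n := by
    rcases hm with h | h
    · rw [h]
    · rw [h]; exact Dvd.intro_left 2 rfl
  have hpn : p ∣ n := hpm.trans hmn
  have hpodd : p ≠ 2 := by
    intro h
    obtain ⟨t, ht⟩ := hpm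
    rw [h] at ht
    omega
  have hpbad : p % 20 = 3 ∨ p % 20 = 7 := (hbadall p hpp hpn).resolve_left hpodd
  obtain ⟨m', hmm'⟩ := hpm
  by_cases hm'1 : m' = 1
  · rcases hm with h | h
    · exfalso
      have hrep : α.re^2+5*α.im^2 = (p:ℤ) := by
        rw [← nrm, ← hncast, h, hmm', hm'1, mul_one]
      exact no_rep_bad p (Or.inr (by omega)) _ _ hrep
    · refine ⟨2, p, Nat.prime_two, hpp, Or.inl rfl, Or.inr hpbad, ?_⟩
      rw [h, hmm', hm'1, mul_one]
  · have hm'0 : m' ≠ 0 := by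
      intro h
      rw [h, mul_zero] at hmm'
      omega
    set q := m'.minFac with hqdef
    have hqp : q.Prime := Nat.minFac_prime hm'1
    have hqm' : q ∣ m' := Nat.minFac_dvd m'
    have hqn : q ∣ n := (hqm'.trans ⟨p, by rw [hmm']; ring⟩).trans hmn
    have hqodd : q ≠ 2 := by
      intro h
      obtain ⟨t, ht⟩ := hqm'
      rw [h] at ht
      have h2m : 2 ∣ m := ⟨p*t, by rw [hmm', ht]; ring⟩
      omega
    have hqbad : q % 20 = 3 ∨ q % 20 = 7 := (hbadall q hqp hqn).resolve_left hqodd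
    have hpqn : (p*q) ∣ n := by
      obtain ⟨t, ht⟩ := hqm'
      exact dvd_trans ⟨t, by rw [hmm', ht]; ring⟩ hmn
    obtain ⟨β, hβα, hβnorm⟩ := exists_divisor α p q (fun _ => trivial) hpp hqp hpbad hqbad
      (by
        obtain ⟨t, ht⟩ := hpqn
        exact ⟨t, by rw [← hncast, ht]; push_cast; ring⟩)
      (hA p hpp) (hA q hqp)
    obtain ⟨γ, hγ⟩ := hβα
    have hβunit : ¬ IsUnit β := by
      rw [← Zsqrtd.norm_eq_one_iff, hβnorm]
      have := hpp.two_le; have := hqp.two_le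
      simp only [Int.natAbs_natCast]
      nlinarith
    have hγunit : IsUnit γ := (hirr.isUnit_or_isUnit hγ).resolve_left hβunit
    have hγ1 : γ.norm = 1 := (Zsqrtd.norm_eq_one_iff' (by norm_num) γ).mpr hγunit
    refine ⟨p, q, hpp, hqp, Or.inr hpbad, Or.inr hqbad, ?_⟩
    have : (n:ℤ) = ((p*q:ℕ):ℤ) := by
      rw [hncast, hγ, Zsqrtd.norm_mul, hβnorm, hγ1, mul_one]
    exact_mod_cast this

/-- In `ℤ[√−5]`, an element is irreducible but not prime if and only if the
absolute value of its norm is `p₁ p₂` where each `pᵢ` is a rational prime equal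
to `2` or congruent to `3` or `7` modulo `20`. -/
theorem irreducible_not_prime_iff_zsqrtd_neg_five (α : ℤ√(-5)) :
    (Irreducible α ∧ ¬Prime α) ↔
      ∃ p₁ p₂ : ℕ, p₁.Prime ∧ p₂.Prime ∧
        (p₁ = 2 ∨ p₁ % 20 = 3 ∨ p₁ % 20 = 7) ∧
        (p₂ = 2 ∨ p₂ % 20 = 3 ∨ p₂ % 20 = 7) ∧
        (α.norm).natAbs = p₁ * p₂ := by
  constructor
  · rintro ⟨hirr, hnp⟩
    have hpos : 0 ≤ α.norm := Zsqrtd.norm_nonneg (by norm_num) α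
    have hne0 : α ≠ 0 := hirr.ne_zero
    have hnorm0 : α.norm ≠ 0 := fun h => hne0 ((Zsqrtd.norm_eq_zero_iff (by norm_num) α).mp h)
    set n := α.norm.natAbs with hndef
    have hncast : (n:ℤ) = α.norm := Int.natAbs_of_nonneg hpos
    have hn1 : n ≠ 1 := fun h => hirr.not_isUnit (Zsqrtd.norm_eq_one_iff.mp h)
    have hn0 : n ≠ 0 := fun h => hnorm0 (by rw [← hncast, h]; rfl)
    have h2n : 2 ≤ n := by omega
    have hbadall : ∀ r : ℕ, r.Prime → r ∣ n → (r = 2 ∨ r % 20 = 3 ∨ r % 20 = 7) := by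
      intro r hr hrn
      refine bad_of_prime_dvd α hirr hnp r hr ?_
      rw [← hncast]
      exact_mod_cast Int.natCast_dvd_natCast.mpr hrn
    have hbase : (n:ℤ) = α.re^2 + 5*α.im^2 := by rw [hncast, nrm]
    by_cases hA : ∃ r : ℕ, r.Prime ∧ ((r:ℤ) : ℤ√(-5)) ∣ α
    · obtain ⟨r, hr, ⟨γ, hγ⟩⟩ := hA
      have hrne : ¬ IsUnit ((r:ℤ) : ℤ√(-5)) := by
        rw [← Zsqrtd.norm_eq_one_iff, Zsqrtd.norm_intCast]
        have := hr.two_le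
        simp only [Int.natAbs_mul, Int.natAbs_natCast]
        nlinarith
      have hγunit : IsUnit γ := (hirr.isUnit_or_isUnit hγ).resolve_left hrne
      have hγ1 : γ.norm = 1 := (Zsqrtd.norm_eq_one_iff' (by norm_num) γ).mpr hγunit
      have hnn : (n:ℤ) = (r:ℤ)*(r:ℤ) := by
        rw [hncast, hγ, Zsqrtd.norm_mul, Zsqrtd.norm_intCast, hγ1, mul_one]
      have hnrr : n = r * r := by exact_mod_cast hnn
      have hbad := hbadall r hr ⟨r, hnrr⟩
      exact ⟨r, r, hr, hr, hbad, hbad, hnrr⟩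
    · push_neg at hA
      by_cases h2 : 2 ∣ n
      · have h2norm : (2:ℤ) ∣ (n:ℤ) := by exact_mod_cast Int.natCast_dvd_natCast.mpr h2
        have hnot2 : ¬ ((2:ℤ) ∣ α.re ∧ (2:ℤ) ∣ α.im) := by
          rintro ⟨h1', h2'⟩
          refine hA 2 Nat.prime_two ?_
          rw [show ((2:ℕ):ℤ) = (2:ℤ) by norm_num, Zsqrtd.intCast_dvd]
          exact ⟨h1', h2'⟩
        have hn4 : (n:ℤ) % 4 = 2 := by
          rcases Int.even_or_odd α.re with ⟨u, hu⟩ | ⟨u, hu⟩ <;>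
            rcases Int.even_or_odd α.im with ⟨v, hv⟩ | ⟨v, hv⟩
          · exact absurd ⟨⟨u, by rw [hu]; ring⟩, ⟨v, by rw [hv]; ring⟩⟩ hnot2
          · exfalso
            have key : (n:ℤ) = 4*(u^2+5*v^2+5*v+1)+1 := by
              rw [hbase, hu, hv]; ring
            set w := u^2+5*v^2+5*v+1
            omega
          · exfalso
            have key : (n:ℤ) = 4*(u^2+u+5*v^2)+1 := by
              rw [hbase, hu, hv]; ring
            set w := u^2+u+5*v^2
            omega
          · have key : (n:ℤ) = 4*(u^2+u+5*v^2+5*v+1)+2 := by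
              rw [hbase, hu, hv]; ring
            set w := u^2+u+5*v^2+5*v+1
            omega
        have hn4' : n % 4 = 2 := by omega
        by_cases hm1 : n / 2 = 1
        · exfalso
          have hn2 : n = 2 := by omega
          refine no_rep_bad 2 (Or.inl rfl) α.re α.im ?_
          rw [← hbase, hn2]
        · exact forward_core α hirr n (n/2) hncast hbadall hA (Or.inr (by omega))
            (by omega) (by omega)
      · exact forward_core α hirr n n hncast hbadall hA (Or.inl rfl)
          (by omega) h2n
  · rintro ⟨p₁, p₂, hp₁, hp₂, hb₁, hb₂, hn⟩
    have hpos : 0 ≤ α.norm := Zsqrtd.norm_nonneg (by norm_num) α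
    have hncast : α.norm = ((p₁*p₂ : ℕ) : ℤ) := by
      rw [← hn]
      exact (Int.natAbs_of_nonneg hpos).symm
    have h2le₁ := hp₁.two_le
    have h2le₂ := hp₂.two_le
    have hb₁' : p₁ = 2 ∨ p₁ % 4 = 3 := by omega
    have hb₂' : p₂ = 2 ∨ p₂ % 4 = 3 := by omega
    constructor
    · constructor
      · intro hu
        have h1 := Zsqrtd.norm_eq_one_iff.mpr hu
        rw [hn] at h1
        nlinarith
      · intro β γ hβγ
        by_contra hcon
        push_neg at hcon
        obtain ⟨hβu, hγu⟩ := hcon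
        have hd : β.norm.natAbs * γ.norm.natAbs = p₁ * p₂ := by
          rw [← Int.natAbs_mul, ← Zsqrtd.norm_mul, ← hβγ, hn]
        have hβ1 : β.norm.natAbs ≠ 1 := fun h => hβu (Zsqrtd.norm_eq_one_iff.mp h)
        have hγ1 : γ.norm.natAbs ≠ 1 := fun h => hγu (Zsqrtd.norm_eq_one_iff.mp h)
        have hdp : β.norm.natAbs = p₁ ∨ β.norm.natAbs = p₂ := by
          set d := β.norm.natAbs with hddef
          set e := γ.norm.natAbs with hedef
          rcases (Nat.Prime.dvd_mul hp₁).mp (⟨p₂, hd⟩ : p₁ ∣ d*e) with h | h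
          · obtain ⟨d', hd'⟩ := h
            have he : d' * e = p₂ := by
              have h3 : p₁ * (d' * e) = p₁ * p₂ := by rw [← hd, hd']; ring
              exact Nat.eq_of_mul_eq_mul_left (by omega) h3
            rcases hp₂.eq_one_or_self_of_dvd d' ⟨e, he.symm⟩ with h1 | h1
            · left; rw [hd', h1, mul_one]
            · exfalso
              apply hγ1
              rw [h1] at he
              exact Nat.eq_of_mul_eq_mul_left (show 0 < p₂ by omega)
                (by rw [mul_one]; exact he)
          · obtain ⟨e', he'⟩ := h
            have hde : d * e' = p₂ := by
              have h3 : p₁ * (d * e') = p₁ * p₂ := by rw [← hd, he']; ring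
              exact Nat.eq_of_mul_eq_mul_left (by omega) h3
            rcases hp₂.eq_one_or_self_of_dvd d ⟨e', hde.symm⟩ with h1 | h1
            · exact absurd h1 hβ1
            · right; exact h1
        have hβpos : 0 ≤ β.norm := Zsqrtd.norm_nonneg (by norm_num) β
        have hβrep : β.re^2+5*β.im^2 = (β.norm.natAbs : ℤ) := by
          rw [Int.natAbs_of_nonneg hβpos, nrm]
        rcases hdp with h | h
        · exact no_rep_bad p₁ hb₁' β.re β.im (by rw [hβrep, h])
        · exact no_rep_bad p₂ hb₂' β.re β.im (by rw [hβrep, h])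
    · intro hpr
      have hdvd : α ∣ ((p₁:ℤ) : ℤ√(-5)) * ((p₂:ℤ) : ℤ√(-5)) := by
        refine ⟨star α, ?_⟩
        rw [← Zsqrtd.norm_eq_mul_conj, hncast]
        push_cast
        ring
      suffices claim : ∀ (a b : ℕ), a.Prime → b.Prime → (a = 2 ∨ a % 20 = 3 ∨ a % 20 = 7) →
          α.norm.natAbs = a*b → α ∣ ((a:ℤ) : ℤ√(-5)) → False by
        rcases hpr.2.2 _ _ hdvd with h | h
        · exact claim p₁ p₂ hp₁ hp₂ hb₁ hn h
        · exact claim p₂ p₁ hp₂ hp₁ hb₂ (by rw [hn, Nat.mul_comm]) h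
      intro a b ha hb hba hnab hdva
      have ha2 := ha.two_le
      obtain ⟨δ, hδ⟩ := hdva
      have hnδ : a * a = (a*b) * δ.norm.natAbs := by
        have := congrArg (fun z : ℤ√(-5) => z.norm.natAbs) hδ
        simp only [Zsqrtd.norm_mul, Int.natAbs_mul, Zsqrtd.norm_intCast] at this
        rw [← hnab]
        calc a * a = (((a:ℤ)*(a:ℤ)).natAbs) := by
              rw [Int.natAbs_mul]; simp
        _ = α.norm.natAbs * δ.norm.natAbs := this
      have hab : b = a := by
        have hdvd' : a * b ∣ a * a := ⟨δ.norm.natAbs, hnδ⟩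
        have := (Nat.mul_dvd_mul_iff_left (show 0 < a by omega)).mp hdvd'
        exact (Nat.prime_dvd_prime_iff_eq hb ha).mp this
      have hδ1 : δ.norm.natAbs = 1 := by
        rw [hab] at hnδ
        have : a*a*δ.norm.natAbs = a*a*1 := by rw [mul_one, ← hnδ]
        exact Nat.eq_of_mul_eq_mul_left (by positivity) this
      have hδu : IsUnit δ := Zsqrtd.norm_eq_one_iff.mp hδ1
      have hassoc : Associated α ((a:ℤ) : ℤ√(-5)) :=
        ⟨hδu.unit, by rw [IsUnit.unit_spec]; exact hδ.symm⟩
      have hpa : Prime ((a:ℤ) : ℤ√(-5)) := hassoc.prime hpr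
      obtain ⟨c, hc⟩ : ∃ c : ℤ, (a:ℤ) ∣ c^2+5 := by
        rcases hba with h2' | hmod
        · exact ⟨1, by rw [h2']; norm_num⟩
        · haveI : Fact a.Prime := ⟨ha⟩
          have h5 : a ≠ 5 := by omega
          have h2' : a ≠ 2 := by omega
          obtain ⟨c₀, hc₀⟩ := (isSquare_neg_five_iff a h2' h5).mpr (by omega)
          refine ⟨(c₀.val : ℤ), ?_⟩
          rw [← ZMod.intCast_zmod_eq_zero_iff_dvd]
          push_cast
          rw [ZMod.natCast_rightInverse c₀]
          linear_combination -hc₀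
      exact not_prime_coe a ha c hc hpa
end

section
/- Let G be a cyclic group of order h ≥ 6, and let g_1, ..., g_h be elements of G forming a minimal product-one sequence of length h (product is identity, no proper nonempty subproduct is identity). Then all g_i are equal to a common element c which generates G. -/
private lemma take_prod_ne {G : Type*} [CommGroup G]
    (h : ℕ) (m : Multiset G) (hlen : Multiset.card m = h)
    (hmin : ∀ s ≤ m, s.prod = 1 → s = 0 ∨ s = m)
    (l : List G) (hl : (l : Multiset G) = m)
    {i j : ℕ} (hij : i < j) (hjh : j < h) :
    (l.take i).prod ≠ (l.take j).prod := by
  intro heq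
  have hlen' : l.length = h := by
    have := congrArg Multiset.card hl
    simpa [hlen] using this
  set s : List G := (l.drop i).take (j - i) with hs
  have htake : l.take j = l.take i ++ s := by
    have hji : i + (j - i) = j := by omega
    rw [← hji, List.take_add]
  have hsprod : s.prod = 1 := by
    have h2 := congrArg List.prod htake
    rw [List.prod_append] at h2
    rw [h2] at heq
    exact left_eq_mul.mp heq
  have hsle : (s : Multiset G) ≤ m := by
    rw [← hl, Multiset.coe_le]
    exact ((List.take_sublist _ _).trans (List.drop_sublist _ _)).subperm
  have hscard : s.length = j - i := by
    rw [hs, List.length_take, List.length_drop, hlen']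
    omega
  rcases hmin s hsle (by simpa using hsprod) with h0 | hm
  · have : s.length = 0 := by simpa using congrArg Multiset.card h0
    omega
  · have : s.length = h := by
      have := congrArg Multiset.card hm
      simpa [hlen] using this
    omega

private lemma take_prod_bij {G : Type*} [CommGroup G] [Fintype G]
    (h : ℕ) (hcard : Fintype.card G = h) (m : Multiset G)
    (hlen : Multiset.card m = h)
    (hmin : ∀ s ≤ m, s.prod = 1 → s = 0 ∨ s = m)
    (l : List G) (hl : (l : Multiset G) = m) :
    Function.Bijective (fun i : Fin h => (l.take (i : ℕ)).prod) := by
  rw [Fintype.bijective_iff_injective_and_card]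
  refine ⟨?_, by simp [hcard]⟩
  intro i j hij
  by_contra hne
  rcases lt_or_gt_of_ne (fun hc : (i : ℕ) = (j : ℕ) => hne (Fin.ext hc)) with hlt | hlt
  · exact take_prod_ne h m hlen hmin l hl hlt j.isLt hij
  · exact take_prod_ne h m hlen hmin l hl hlt i.isLt hij.symm

private lemma bij_agree {α β : Type*} {f g : α → β} (hf : Function.Bijective f)
    (hg : Function.Bijective g) (x : α) (hagree : ∀ y, y ≠ x → f y = g y) :
    f x = g x := by
  obtain ⟨y, hy⟩ := hf.surjective (g x)
  by_cases hyx : y = x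
  · rw [hyx] at hy; exact hy
  · exact absurd (hg.injective ((hagree y hyx).symm.trans hy)) hyx

/-- In a cyclic group of order `h ≥ 6`, every minimal product-one sequence of
length `h` consists of `h` copies of a single generator of the group. -/
theorem minimal_product_one_of_length_card
    {G : Type*} [CommGroup G] [Fintype G] [IsCyclic G]
    (h : ℕ) (hcard : Fintype.card G = h) (hh : 6 ≤ h)
    (m : Multiset G) (hlen : Multiset.card m = h)
    (hprod : m.prod = 1)
    (hmin : ∀ s ≤ m, s.prod = 1 → s = 0 ∨ s = m) :
    ∃ c : G, (∀ g ∈ m, g = c) ∧ Subgroup.zpowers c = ⊤ := by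
  classical
  have h1 : (1 : ℕ) < h := by omega
  -- all elements of m are equal
  have hall : ∀ a ∈ m, ∀ b ∈ m, a = b := by
    intro a ha b hb
    by_contra hab
    have hba : b ≠ a := fun hc => hab hc.symm
    have hb' : b ∈ m.erase a := (Multiset.mem_erase_of_ne hba).mpr hb
    set R : Multiset G := (m.erase a).erase b with hR
    have hm' : a ::ₘ b ::ₘ R = m := by
      rw [hR, Multiset.cons_erase hb', Multiset.cons_erase ha]
    set r : List G := R.toList with hr
    have hrR : (r : Multiset G) = R := Multiset.coe_toList R
    have hl1 : ((a :: b :: r : List G) : Multiset G) = m := by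
      rw [← hm', ← hrR]; rfl
    have hl2 : ((b :: a :: r : List G) : Multiset G) = m := by
      rw [← hl1]
      exact Multiset.coe_eq_coe.mpr (List.Perm.swap a b r)
    have hf1 := take_prod_bij h hcard m hlen hmin _ hl1
    have hf2 := take_prod_bij h hcard m hlen hmin _ hl2
    have hagree : ∀ y : Fin h, y ≠ ⟨1, h1⟩ →
        ((a :: b :: r).take (y : ℕ)).prod = ((b :: a :: r).take (y : ℕ)).prod := by
      intro y hy
      have hy1 : (y : ℕ) ≠ 1 := fun hc => hy (Fin.ext hc)
      rcases Nat.lt_or_ge (y : ℕ) 2 with hlt | hge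
      · have hy0 : (y : ℕ) = 0 := by omega
        rw [hy0]
        simp
      · obtain ⟨k, hk⟩ : ∃ k, (y : ℕ) = k + 2 := ⟨(y : ℕ) - 2, by omega⟩
        rw [hk]
        simp [List.take_succ_cons, mul_left_comm, mul_comm]
    have := bij_agree hf1 hf2 ⟨1, h1⟩ hagree
    simp at this
    exact hab this
  -- pick c
  have hne : m ≠ 0 := by
    intro hc; rw [hc] at hlen; simp at hlen; omega
  obtain ⟨c, hc⟩ := Multiset.exists_mem_of_ne_zero hne
  refine ⟨c, fun g hg => hall g hg c hc, ?_⟩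
  -- m = replicate h c
  have hrep : m = Multiset.replicate h c :=
    (Multiset.eq_replicate.mpr ⟨hlen, fun b hb => hall b hb c hc⟩)
  have hlrep : ((List.replicate h c : List G) : Multiset G) = m := by
    rw [hrep, Multiset.coe_replicate]
  have hbij := take_prod_bij h hcard m hlen hmin _ hlrep
  -- the map i ↦ c ^ i is injective on Fin h, so orderOf c = h
  have hpow : ∀ i : Fin h, ((List.replicate h c).take (i : ℕ)).prod = c ^ (i : ℕ) := by
    intro i
    rw [List.take_replicate, List.prod_replicate, min_eq_left i.isLt.le]
  have hord : orderOf c = h := by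
    have hle : orderOf c ≤ h := hcard ▸ orderOf_le_card_univ
    rcases Nat.lt_or_ge (orderOf c) h with hlt | hge
    · exfalso
      have hpos : 0 < orderOf c := orderOf_pos c
      have : ((List.replicate h c).take ((⟨orderOf c, hlt⟩ : Fin h) : ℕ)).prod
          = ((List.replicate h c).take ((⟨0, by omega⟩ : Fin h) : ℕ)).prod := by
        rw [hpow, hpow]
        simp [pow_orderOf_eq_one]
      have := hbij.injective this
      simp only [Fin.ext_iff, Fin.val_mk] at this
      omega
    · omega
  apply Subgroup.eq_top_of_card_eq
  rw [Nat.card_zpowers, hord, Nat.card_eq_fintype_card, hcard]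
end

section
/- Let G be a cyclic group of order h ≥ 6, and let g_1, ..., g_{h−1} ∈ G form a minimal product-one sequence of length h−1. Then there is a generator c of G such that, after reordering, g_1 = ⋯ = g_{h−2} = c and g_{h−1} = c². -/
section Aux

variable {G : Type*} [CommGroup G]

/-- Prefix products of an ordering of a minimal product-one multiset of length `h-1`
are pairwise distinct for indices `0, …, h-2`. -/
private lemma prefix_prod_ne (h : ℕ) (hh : 6 ≤ h) (m : Multiset G)
    (hlen : Multiset.card m = h - 1)
    (hmin : ∀ s ≤ m, s.prod = 1 → s = 0 ∨ s = m)
    (l : List G) (hl : (l : Multiset G) = m)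
    {i j : ℕ} (hij : i < j) (hj : j ≤ h - 2) :
    (l.take i).prod ≠ (l.take j).prod := by
  intro heq
  have hll : l.length = h - 1 := by
    have := Multiset.coe_card l
    rw [hl, hlen] at this; omega
  set B : List G := (l.drop i).take (j - i) with hB
  have htake : l.take j = l.take i ++ B := by
    have hji : j = i + (j - i) := by omega
    rw [hji, List.take_add]
  have hBprod : B.prod = 1 := by
    have h2 := congrArg List.prod htake
    rw [List.prod_append, ← heq] at h2
    exact (mul_eq_left.mp h2.symm)
  have hBsub : (↑B : Multiset G) ≤ m := by
    rw [← hl, Multiset.coe_le]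
    exact (((l.drop i).take_sublist (j - i)).trans (l.drop_sublist i)).subperm
  have hBlen : B.length = j - i := by
    rw [hB, List.length_take, List.length_drop]
    omega
  rcases hmin (↑B) hBsub (by simpa using hBprod) with h0 | hm'
  · have : B.length = 0 := by
      have := congrArg Multiset.card h0
      simpa using this
    omega
  · have : B.length = h - 1 := by
      have := congrArg Multiset.card hm'
      rw [Multiset.coe_card, hlen] at this
      exact this
    omega

/-- The key "swap" lemma: in any ordering `a :: b :: c :: r` of a minimal
product-one multiset of length `h-1` with `a ≠ b`, `b ≠ c`, one has `b = a*c`. -/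
private lemma middle_eq [Fintype G] (h : ℕ) (hh : 6 ≤ h) (hcard : Fintype.card G = h)
    (m : Multiset G) (hlen : Multiset.card m = h - 1)
    (hmin : ∀ s ≤ m, s.prod = 1 → s = 0 ∨ s = m)
    (a b c : G) (r : List G) (hm : ((a :: b :: c :: r : List G) : Multiset G) = m)
    (hab : a ≠ b) (hbc : b ≠ c) : b = a * c := by
  classical
  set l : List G := a :: b :: c :: r with hldef
  set l' : List G := b :: a :: c :: r with hl'def
  set l'' : List G := a :: c :: b :: r with hl''def
  have hm' : ((l' : List G) : Multiset G) = m := by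
    rw [← hm]
    simp only [hldef, hl'def, ← Multiset.cons_coe]
    exact Multiset.cons_swap b a _
  have hm'' : ((l'' : List G) : Multiset G) = m := by
    rw [← hm]
    simp only [hldef, hl''def, ← Multiset.cons_coe]
    rw [Multiset.cons_swap c b]
  -- pointwise comparison of prefix products
  have e1 : ∀ k, k ≠ 1 → (l.take k).prod = (l'.take k).prod := by
    intro k hk
    match k with
    | 0 => rfl
    | 1 => exact absurd rfl hk
    | (k+2) =>
      simp only [hldef, hl'def, List.take_succ_cons, List.prod_cons]
      rw [← mul_assoc, ← mul_assoc, mul_comm a b]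
  have e2 : ∀ k, k ≠ 2 → (l.take k).prod = (l''.take k).prod := by
    intro k hk
    match k with
    | 0 => rfl
    | 1 => rfl
    | 2 => exact absurd rfl hk
    | (k+3) =>
      simp only [hldef, hl''def, List.take_succ_cons, List.prod_cons]
      rw [mul_left_comm b c]
  set P : Finset G := (Finset.range (h-1)).image (fun i => (l.take i).prod) with hP
  have hPcard : P.card = h - 1 := by
    rw [hP]
    rw [Finset.card_image_of_injOn, Finset.card_range]
    intro i hi j hj hij
    simp only [Finset.coe_range, Set.mem_Iio] at hi hj
    by_contra hne
    rcases lt_or_gt_of_ne hne with h1 | h1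
    · exact prefix_prod_ne h hh m hlen hmin l hm h1 (by omega) hij
    · exact prefix_prod_ne h hh m hlen hmin l hm h1 (by omega) hij.symm
  have hbP : b ∉ P := by
    intro hbmem
    obtain ⟨i, hi, hip⟩ := Finset.mem_image.mp hbmem
    rw [Finset.mem_range] at hi
    rcases eq_or_ne i 1 with rfl | hne
    · exact hab (by simpa [hldef] using hip)
    · have h1 : (l'.take 1).prod = b := by simp [hl'def]
      have h2 : (l'.take i).prod = (l'.take 1).prod := by
        rw [← e1 i hne, hip, h1]
      rcases lt_or_gt_of_ne hne with hlt | hgt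
      · have : i = 0 := by omega
        subst this
        exact prefix_prod_ne h hh m hlen hmin l' hm' (by omega) (by omega) h2
      · exact prefix_prod_ne h hh m hlen hmin l' hm' hgt (by omega) h2.symm
  have hacP : a * c ∉ P := by
    intro hacmem
    obtain ⟨i, hi, hip⟩ := Finset.mem_image.mp hacmem
    rw [Finset.mem_range] at hi
    rcases eq_or_ne i 2 with rfl | hne
    · have : a * b = a * c := by simpa [hldef] using hip
      exact hbc (mul_left_cancel this)
    · have h1 : (l''.take 2).prod = a * c := by simp [hl''def]
      have h2 : (l''.take i).prod = (l''.take 2).prod := by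
        rw [← e2 i hne, hip, h1]
      rcases lt_or_gt_of_ne hne with hlt | hgt
      · exact prefix_prod_ne h hh m hlen hmin l'' hm'' hlt (by omega) h2
      · exact prefix_prod_ne h hh m hlen hmin l'' hm'' hgt (by omega) h2.symm
  have hcompl : Pᶜ.card = 1 := by
    rw [Finset.card_compl, hPcard, hcard]; omega
  obtain ⟨u, hu⟩ := Finset.card_eq_one.mp hcompl
  have h1 : b ∈ Pᶜ := Finset.mem_compl.mpr hbP
  have h2 : a * c ∈ Pᶜ := Finset.mem_compl.mpr hacP
  rw [hu, Finset.mem_singleton] at h1 h2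
  rw [h1, h2]


/-- If `m = x^p · y^q` with `p ≥ 2`, `q ≥ 1`, `x ≠ y`, then `y = x * x`. -/
private lemma two_val [Fintype G] (h : ℕ) (hh : 6 ≤ h) (hcard : Fintype.card G = h)
    (m : Multiset G) (hlen : Multiset.card m = h - 1)
    (hmin : ∀ s ≤ m, s.prod = 1 → s = 0 ∨ s = m)
    (x y : G) (hxy : x ≠ y) (p q : ℕ) (hp : 2 ≤ p) (hq : 1 ≤ q)
    (hm : m = Multiset.replicate p x + Multiset.replicate q y) : y = x * x := by
  classical
  obtain ⟨p', rfl⟩ : ∃ p', p = p' + 2 := ⟨p - 2, by omega⟩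
  obtain ⟨q', rfl⟩ : ∃ q', q = q' + 1 := ⟨q - 1, by omega⟩
  have hL : ((x :: y :: x :: (List.replicate p' x ++ List.replicate q' y) : List G) :
      Multiset G) = m := by
    rw [hm]
    simp only [← Multiset.cons_coe, ← Multiset.coe_add, Multiset.coe_replicate]
    ext a
    simp only [Multiset.count_cons, Multiset.count_add, Multiset.count_replicate, eq_comm]
    split_ifs <;> omega
  exact middle_eq h hh hcard m hlen hmin x y x _ hL hxy (Ne.symm hxy)

/-- Conclusion in the case `m = x^(h-2) · y`. -/
private lemma final_case [Fintype G] (h : ℕ) (hh : 6 ≤ h) (hcard : Fintype.card G = h)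
    (m : Multiset G) (hlen : Multiset.card m = h - 1)
    (hmin : ∀ s ≤ m, s.prod = 1 → s = 0 ∨ s = m)
    (x y : G) (hxy : x ≠ y)
    (hm : m = Multiset.replicate (h - 2) x + Multiset.replicate 1 y) :
    ∃ c : G, Subgroup.zpowers c = ⊤ ∧
      m = Multiset.replicate (h - 2) c + {c ^ 2} := by
  classical
  have hy : y = x * x :=
    two_val h hh hcard m hlen hmin x y hxy (h - 2) 1 (by omega) le_rfl hm
  have key : ∀ k, 1 ≤ k → k ≤ h - 1 → x ^ k ≠ 1 := by
    intro k hk1 hk2 hxk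
    by_cases hk : k ≤ h - 2
    · have hsub : Multiset.replicate k x ≤ m := by
        rw [hm]
        exact le_trans ((Multiset.replicate_le_replicate x).mpr hk)
          (Multiset.le_add_right _ _)
      rcases hmin _ hsub (by simpa [Multiset.prod_replicate] using hxk) with h0 | hm' <;>
        [skip; skip]
      · have := congrArg Multiset.card h0
        simp [Multiset.card_replicate] at this
        omega
      · have := congrArg Multiset.card hm'
        rw [Multiset.card_replicate, hlen] at this
        omega
    · -- k = h - 1
      have hk' : k = h - 1 := by omega
      have hsub : Multiset.replicate (h - 3) x + Multiset.replicate 1 y ≤ m := by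
        rw [hm]
        exact add_le_add ((Multiset.replicate_le_replicate x).mpr (by omega)) le_rfl
      have hprodeq : (Multiset.replicate (h - 3) x + Multiset.replicate 1 y).prod = 1 := by
        rw [Multiset.prod_add, Multiset.prod_replicate, Multiset.prod_replicate, hy, pow_one]
        calc x ^ (h - 3) * (x * x) = x ^ (h - 3) * x ^ 2 := by rw [pow_two]
          _ = x ^ (h - 3 + 2) := (pow_add x _ _).symm
          _ = x ^ k := by rw [hk']; congr 1; omega
          _ = 1 := hxk
      rcases hmin _ hsub hprodeq with h0 | hm'
      · have := congrArg Multiset.card h0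
        simp only [Multiset.card_add, Multiset.card_replicate, Multiset.card_zero] at this
        omega
      · have := congrArg Multiset.card hm'
        simp only [Multiset.card_add, Multiset.card_replicate, hlen] at this
        omega
  have hord : orderOf x = h := by
    have hdvd : orderOf x ∣ h := hcard ▸ orderOf_dvd_card
    have hpos : 0 < orderOf x := orderOf_pos x
    by_contra hne
    have hle : orderOf x ≤ h - 1 := by
      have := Nat.le_of_dvd (by omega) hdvd
      omega
    exact key _ hpos hle (pow_orderOf_eq_one x)
  refine ⟨x, ?_, ?_⟩
  · apply Subgroup.eq_top_of_card_eq
    rw [Nat.card_zpowers, hord, Nat.card_eq_fintype_card, hcard]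
  · rw [hm, Multiset.replicate_one, hy, ← sq]

end Aux

/-- In a cyclic group of order `h ≥ 6`, every minimal product-one sequence of
length `h − 1` consists, up to reordering, of `h − 2` copies of a generator `c`
together with one copy of `c²`. -/
theorem minimal_product_one_of_length_card_sub_one
    {G : Type*} [CommGroup G] [Fintype G] [IsCyclic G]
    (h : ℕ) (hcard : Fintype.card G = h) (hh : 6 ≤ h)
    (m : Multiset G) (hlen : Multiset.card m = h - 1)
    (hprod : m.prod = 1)
    (hmin : ∀ s ≤ m, s.prod = 1 → s = 0 ∨ s = m) :
    ∃ c : G, Subgroup.zpowers c = ⊤ ∧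
      m = Multiset.replicate (h - 2) c + {c ^ 2} := by
  classical
  -- Step 1: no three pairwise distinct values occur in `m`.
  have no3 : ∀ x ∈ m, ∀ y ∈ m, ∀ z ∈ m, x ≠ y → x ≠ z → y ≠ z → False := by
    intro x hx y hy z hz hxy hxz hyz
    have hy' : y ∈ m.erase x := (Multiset.mem_erase_of_ne (Ne.symm hxy)).mpr hy
    have hz' : z ∈ (m.erase x).erase y := by
      rw [Multiset.mem_erase_of_ne (Ne.symm hyz), Multiset.mem_erase_of_ne (Ne.symm hxz)]
      exact hz
    set rest : Multiset G := ((m.erase x).erase y).erase z with hrest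
    have hm3 : x ::ₘ y ::ₘ z ::ₘ rest = m := by
      rw [hrest, Multiset.cons_erase hz', Multiset.cons_erase hy', Multiset.cons_erase hx]
    have hcoe : ∀ u v w : G, u ::ₘ v ::ₘ w ::ₘ rest = m →
        ((u :: v :: w :: rest.toList : List G) : Multiset G) = m := by
      intro u v w huvw
      simp only [← Multiset.cons_coe, Multiset.coe_toList]
      exact huvw
    have e1 : y = x * z :=
      middle_eq h hh hcard m hlen hmin x y z rest.toList (hcoe x y z hm3) hxy hyz
    have e2 : z = x * y :=
      middle_eq h hh hcard m hlen hmin x z y rest.toList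
        (hcoe x z y (by rw [Multiset.cons_swap z y]; exact hm3)) hxz (Ne.symm hyz)
    have e3 : x = y * z :=
      middle_eq h hh hcard m hlen hmin y x z rest.toList
        (hcoe y x z (by rw [Multiset.cons_swap y x]; exact hm3)) (Ne.symm hxy) hxz
    -- from e1, e2 : x * x = 1, hence x * y * z = 1
    have hxx : x * x = 1 := by
      have : y = (x * x) * y := by
        conv_lhs => rw [e1, e2]
        rw [mul_assoc]
      have h2 : (1 : G) * y = (x * x) * y := by rw [one_mul]; exact this
      exact (mul_right_cancel h2).symm
    have hxyz : x * y * z = 1 := by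
      rw [mul_assoc, ← e3, hxx]
    have hsub : (x ::ₘ y ::ₘ z ::ₘ 0 : Multiset G) ≤ m := by
      rw [← hm3]
      exact Multiset.cons_le_cons _ (Multiset.cons_le_cons _ (Multiset.cons_le_cons _
        (Multiset.zero_le _)))
    rcases hmin _ hsub (by simpa [mul_assoc] using hxyz) with h0 | hm'
    · simpa using congrArg Multiset.card h0
    · have := congrArg Multiset.card hm'
      rw [hlen] at this
      simp at this
      omega
  -- Step 2: pick an element
  have hm0 : m ≠ 0 := by
    intro h0
    rw [h0] at hlen
    simp at hlen
    omega
  obtain ⟨x, hx⟩ := Multiset.exists_mem_of_ne_zero hm0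
  by_cases hall : ∀ y ∈ m, y = x
  · -- all elements equal: impossible
    exfalso
    have hrep : m = Multiset.replicate (h - 1) x := by
      rw [← hlen]
      exact Multiset.eq_replicate_card.mpr hall
    have hpow : x ^ (h - 1) = 1 := by
      rw [hrep, Multiset.prod_replicate] at hprod
      exact hprod
    have hd1 : orderOf x ∣ h - 1 := orderOf_dvd_of_pow_eq_one hpow
    have hd2 : orderOf x ∣ h := hcard ▸ orderOf_dvd_card
    have hd : orderOf x ∣ 1 := by
      have := Nat.dvd_sub hd2 hd1
      have he : h - (h - 1) = 1 := by omega
      rwa [he] at this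
    have hx1 : x = 1 := orderOf_eq_one_iff.mp (Nat.dvd_one.mp hd)
    have hsub : ({x} : Multiset G) ≤ m := Multiset.singleton_le.mpr hx
    rcases hmin _ hsub (by simp [hx1]) with h0 | hm'
    · simpa using congrArg Multiset.card h0
    · have := congrArg Multiset.card hm'
      rw [hlen] at this
      simp at this
      omega
  · push_neg at hall
    obtain ⟨y, hy, hyx⟩ := hall
    have hxy : x ≠ y := Ne.symm hyx
    have hval : ∀ z ∈ m, z = x ∨ z = y := by
      intro z hz
      by_contra hc
      push_neg at hc
      exact no3 x hx y hy z hz hxy (Ne.symm hc.1) (Ne.symm hc.2)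
    set p := m.count x with hpdef
    set q := m.count y with hqdef
    have hmrep : m = Multiset.replicate p x + Multiset.replicate q y := by
      ext a
      rw [Multiset.count_add, Multiset.count_replicate, Multiset.count_replicate]
      by_cases hax : a = x
      · subst hax
        rw [if_pos rfl, if_neg (Ne.symm hxy)]
        omega
      · by_cases hay : a = y
        · subst hay
          rw [if_neg hxy, if_pos rfl]
          omega
        · rw [if_neg (fun hh' => hax hh'.symm), if_neg (fun hh' => hay hh'.symm)]
          rw [Multiset.count_eq_zero]
          intro ha
          rcases hval a ha with h1 | h1
          · exact hax h1
          · exact hay h1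
    have hp1 : 1 ≤ p := Multiset.one_le_count_iff_mem.mpr hx
    have hq1 : 1 ≤ q := Multiset.one_le_count_iff_mem.mpr hy
    have hpq : p + q = h - 1 := by
      have := congrArg Multiset.card hmrep
      rw [hlen, Multiset.card_add, Multiset.card_replicate, Multiset.card_replicate] at this
      omega
    by_cases hp2 : 2 ≤ p
    · by_cases hq2 : 2 ≤ q
      · -- both multiplicities ≥ 2 : impossible
        exfalso
        have e1 : y = x * x := two_val h hh hcard m hlen hmin x y hxy p q hp2 hq1 hmrep
        have e2 : x = y * y := two_val h hh hcard m hlen hmin y x (Ne.symm hxy) q p hq2 hp1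
          (by rw [add_comm] at hmrep; exact hmrep)
        have hxy1 : x * y = 1 := by
          have h4 : x = (x * (x * x)) * x := by
            conv_lhs => rw [e2, e1]
            group
          have h5 : (1 : G) * x = (x * (x * x)) * x := by rw [one_mul]; exact h4
          have h6 : (1 : G) = x * (x * x) := mul_right_cancel h5
          rw [e1, ← h6]
        have hsub : ({x} + {y} : Multiset G) ≤ m := by
          rw [hmrep]
          exact add_le_add
            ((Multiset.replicate_one x) ▸ (Multiset.replicate_le_replicate x).mpr hp1)
            ((Multiset.replicate_one y) ▸ (Multiset.replicate_le_replicate y).mpr hq1)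
        rcases hmin _ hsub (by simpa [mul_assoc] using hxy1) with h0 | hm'
        · simpa using congrArg Multiset.card h0
        · have := congrArg Multiset.card hm'
          rw [hlen] at this
          simp at this
          omega
      · -- q = 1
        have hq1' : q = 1 := by omega
        have hp' : p = h - 2 := by omega
        exact final_case h hh hcard m hlen hmin x y hxy (by rw [hmrep, hp', hq1'])
    · -- p = 1, so q = h - 2
      have hp1' : p = 1 := by omega
      have hq' : q = h - 2 := by omega
      exact final_case h hh hcard m hlen hmin y x hyx
        (by rw [hmrep, hp1', hq', add_comm])
end
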